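/- Let D be a self-adjoint operator on H. The set of weakly D-differentiable operators in B(H), equipped with the norm ‖a‖ + ‖wD(a)‖, is complete: if (a_k) is a sequence of weakly D-differentiable operators such that (a_k) and (wD(a_k)) are both Cauchy in operator norm, then a = lim a_k is weakly D-differentiable and wD(a) = lim wD(a_k). -/
import Mathlib


open Complex Filter Topology MeasureTheory
open scoped Topology

local notation "⟪" x ", " y "⟫" => @inner ℂ _ _ x y

variable {H : Type*} [NormedAddCommGroup H] [InnerProductSpace ℂ H] [CompleteSpace H]

/-- `b` is the bounded operator implementing the commutator form
`(ξ, η) ↦ ⟨aξ, Dη⟩ − ⟨aDξ, η⟩` on `dom D × dom D`; i.e. `a` is weakly `D`-differentiable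
with derivative `wD(a) = b`. -/
def IsWeakDeriv (D : H →ₗ.[ℂ] H) (a b : H →L[ℂ] H) : Prop :=
  ∀ ξ η : D.domain, ⟪b (ξ : H), (η : H)⟫ = ⟪a (ξ : H), D η⟫ - ⟪a (D ξ), (η : H)⟫

/-- `conjAd U t a = U t ∘ a ∘ U (−t)`, i.e. `α_t(a) = e^{itD} a e^{-itD}`. -/
noncomputable def conjAd (U : ℝ → H →L[ℂ] H) (t : ℝ) (a : H →L[ℂ] H) : H →L[ℂ] H :=
  (U t).comp (a.comp (U (-t)))

/-- `U` is the strongly continuous one-parameter unitary group `t ↦ e^{itD}`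
generated by the self-adjoint operator `D` (Stone's theorem characterization). -/
structure IsStoneGroupOf (D : H →ₗ.[ℂ] H) (U : ℝ → H →L[ℂ] H) : Prop where
  map_zero : U 0 = 1
  map_add : ∀ s t : ℝ, U (s + t) = (U s).comp (U t)
  isometry : ∀ (t : ℝ) (ξ : H), ‖U t ξ‖ = ‖ξ‖
  hasDerivAt : ∀ ξ : D.domain, HasDerivAt (fun t : ℝ => U t (ξ : H)) (Complex.I • D ξ) 0
  mem_domain : ∀ ξ v : H, HasDerivAt (fun t : ℝ => U t ξ) v 0 → ξ ∈ D.domain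

/-- Completeness: if `(a k)` are weakly `D`-differentiable with derivatives `(b k)`,
and both sequences are Cauchy in operator norm, then the limit `A` of `(a k)` is
weakly `D`-differentiable with `wD(A) = lim b k`. -/
theorem isWeakDeriv_of_cauchy
    (D : H →ₗ.[ℂ] H) (hD : IsSelfAdjoint D)
    (a b : ℕ → H →L[ℂ] H)
    (hw : ∀ k, IsWeakDeriv D (a k) (b k))
    (hCa : CauchySeq a) (hCb : CauchySeq b) :
    ∃ A B : H →L[ℂ] H, Tendsto a atTop (𝓝 A) ∧ Tendsto b atTop (𝓝 B) ∧
      IsWeakDeriv D A B := by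
  obtain ⟨A, hA⟩ := cauchySeq_tendsto_of_complete hCa
  obtain ⟨B, hB⟩ := cauchySeq_tendsto_of_complete hCb
  refine ⟨A, B, hA, hB, fun ξ η => ?_⟩
  have happ : ∀ (c : ℕ → H →L[ℂ] H) (C : H →L[ℂ] H), Tendsto c atTop (𝓝 C) →
      ∀ v : H, Tendsto (fun k => c k v) atTop (𝓝 (C v)) := fun c C hc v =>
    ((ContinuousLinearMap.apply ℂ H v).continuous.tendsto C).comp hc
  have h1 : Tendsto (fun k => ⟪b k (ξ : H), (η : H)⟫) atTop (𝓝 ⟪B (ξ : H), (η : H)⟫) :=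
    (happ b B hB ξ).inner tendsto_const_nhds
  have h2 : Tendsto (fun k => ⟪a k (ξ : H), D η⟫ - ⟪a k (D ξ), (η : H)⟫) atTop
      (𝓝 (⟪A (ξ : H), D η⟫ - ⟪A (D ξ), (η : H)⟫)) :=
    ((happ a A hA ξ).inner tendsto_const_nhds).sub
      ((happ a A hA (D ξ)).inner tendsto_const_nhds)
  exact tendsto_nhds_unique (h1.congr fun k => hw k ξ η) h2
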